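/- IP* polynomial van der Waerden, single linear polynomial case: if A ⊆ ℕ is piecewise syndetic and c ∈ ℕ with c ≥ 1, then the set {n : {m : m ∈ A and m + c·n ∈ A} is piecewise syndetic} is nonempty; in fact it intersects FS(⟨x_k⟩) for every injective sequence ⟨x_k⟩ in ℕ. -/

import Mathlib

open Set

def Thick (A : Set ℕ) : Prop :=
  ∀ F : Finset ℕ, ∃ x : ℕ, ∀ f ∈ F, f + x ∈ A

def PiecewiseSyndetic (A : Set ℕ) : Prop :=
  ∃ F : Finset ℕ, Thick (⋃ t ∈ F, {y : ℕ | t + y ∈ A})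

def Syndetic (A : Set ℕ) : Prop :=
  ∃ F : Finset ℕ, ∀ n : ℕ, ∃ t ∈ F, t + n ∈ A

def FS (x : ℕ → ℕ) : Set ℕ :=
  {n : ℕ | ∃ H : Finset ℕ, H.Nonempty ∧ n = ∑ t ∈ H, x t}

def IPSet (A : Set ℕ) : Prop :=
  ∃ x : ℕ → ℕ, Function.Injective x ∧ FS x ⊆ A

def IPStar (A : Set ℕ) : Prop :=
  ∀ B : Set ℕ, IPSet B → (A ∩ B).Nonempty

lemma not_thick_empty : ¬ Thick (∅ : Set ℕ) := by
  intro h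
  obtain ⟨x, hx⟩ := h {0}
  exact hx 0 (by simp)

lemma not_ps_empty : ¬ PiecewiseSyndetic (∅ : Set ℕ) := by
  rintro ⟨F, hF⟩
  apply not_thick_empty
  convert hF using 1
  simp

lemma ps_union {B C : Set ℕ} (h : PiecewiseSyndetic (B ∪ C)) :
    PiecewiseSyndetic B ∨ PiecewiseSyndetic C := by
  by_contra hcon
  push_neg at hcon
  obtain ⟨hB, hC⟩ := hcon
  obtain ⟨T, hT⟩ := h
  have hB' : ¬ Thick (⋃ t ∈ T, {y : ℕ | t + y ∈ B}) := fun h => hB ⟨T, h⟩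
  simp only [Thick, not_forall, not_exists] at hB'
  obtain ⟨E, hE⟩ := hB'
  apply hC
  refine ⟨(T ×ˢ E).image (fun q => q.1 + q.2), ?_⟩
  intro D
  obtain ⟨a, ha⟩ := hT ((E ×ˢ D).image (fun q => q.1 + q.2))
  refine ⟨a, ?_⟩
  intro d hd
  obtain ⟨e, he, hne⟩ := hE (d + a)
  have hmem : e + d + a ∈ ⋃ t ∈ T, {y : ℕ | t + y ∈ B ∪ C} := by
    apply ha
    exact Finset.mem_image.mpr ⟨(e, d), Finset.mem_product.mpr ⟨he, hd⟩, rfl⟩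
  simp only [mem_iUnion, mem_setOf_eq] at hmem
  obtain ⟨t, ht, htm⟩ := hmem
  have hnB : t + (e + d + a) ∉ B := by
    simp only [mem_iUnion, mem_setOf_eq, not_exists] at hne
    have := hne t ht
    intro hcontra
    apply this
    have : e + (d + a) = e + d + a := by omega
    rw [this]
    exact hcontra
  have htc : t + (e + d + a) ∈ C := htm.resolve_left hnB
  simp only [mem_iUnion, mem_setOf_eq]
  refine ⟨t + e, ?_, ?_⟩
  · exact Finset.mem_image.mpr ⟨(t, e), Finset.mem_product.mpr ⟨ht, he⟩, rfl⟩
  · have : t + e + (d + a) = t + (e + d + a) := by omega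
    rw [this]; exact htc

lemma ps_finset_union {ι : Type} [DecidableEq ι] (I : Finset ι) (B : ι → Set ℕ)
    (h : PiecewiseSyndetic (⋃ i ∈ I, B i)) : ∃ i ∈ I, PiecewiseSyndetic (B i) := by
  induction I using Finset.induction_on with
  | empty => simp only [Finset.notMem_empty, iUnion_of_empty, iUnion_empty] at h
             exact absurd h not_ps_empty
  | insert _ _ hni ih =>
    rename_i a I'
    rw [Finset.set_biUnion_insert] at h
    rcases ps_union h with h1 | h2
    · exact ⟨a, Finset.mem_insert_self a I', h1⟩
    · obtain ⟨i, hi, hpi⟩ := ih h2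
      exact ⟨i, Finset.mem_insert_of_mem hi, hpi⟩

lemma main_aux (A : Set ℕ) (hA : PiecewiseSyndetic A) (c : ℕ)
    (x : ℕ → ℕ) (_hx : Function.Injective x) :
    ({n : ℕ | PiecewiseSyndetic {m : ℕ | m ∈ A ∧ m + c * n ∈ A}} ∩ FS x).Nonempty := by
  classical
  obtain ⟨F, hF⟩ := hA
  rcases F.eq_empty_or_nonempty with rfl | hFne
  · exfalso
    apply not_ps_empty
    refine ⟨∅, ?_⟩
    convert hF using 2
    simp
  set r := F.card with hr_def
  set s : ℕ → ℕ := fun j => c * ∑ i ∈ Finset.range j, x i with hs_def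
  set np : ℕ × ℕ → ℕ := fun p => ∑ i ∈ Finset.Ico p.1 p.2, x i with hnp_def
  set P : Finset (ℕ × ℕ) :=
    (Finset.range (r+1) ×ˢ Finset.range (r+1)).filter (fun p => p.1 < p.2) with hP_def
  have hsum : ∀ j j' : ℕ, j < j' → s j + c * np (j, j') = s j' := by
    intro j j' hjj
    simp only [hs_def, hnp_def]
    rw [← Nat.mul_add]
    congr 1
    exact Finset.sum_range_add_sum_Ico x (le_of_lt hjj)
  have key : PiecewiseSyndetic (⋃ p ∈ P, {m : ℕ | m ∈ A ∧ m + c * np p ∈ A}) := by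
    refine ⟨(F ×ˢ Finset.range (r+1)).image (fun q => q.1 + s q.2), ?_⟩
    intro D
    obtain ⟨a, ha⟩ := hF ((D ×ˢ Finset.range (r+1)).image (fun q => q.1 + s q.2))
    refine ⟨a, ?_⟩
    intro d hd
    -- choice of t j
    have h1 : ∀ j : ℕ, ∃ t, t ∈ F ∧ (j < r + 1 → t + (d + s j + a) ∈ A) := by
      intro j
      by_cases hj : j < r + 1
      · have hmem : d + s j + a ∈ ⋃ t ∈ F, {y : ℕ | t + y ∈ A} := by
          apply ha
          exact Finset.mem_image.mpr ⟨(d, j),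
            Finset.mem_product.mpr ⟨hd, Finset.mem_range.mpr hj⟩, rfl⟩
        simp only [mem_iUnion, mem_setOf_eq] at hmem
        obtain ⟨t, ht, htm⟩ := hmem
        exact ⟨t, ht, fun _ => htm⟩
      · exact ⟨hFne.choose, hFne.choose_spec, fun h => absurd h hj⟩
    choose t ht1 ht2 using h1
    have hpig : ∃ j ∈ Finset.range (r+1), ∃ j' ∈ Finset.range (r+1), j ≠ j' ∧ t j = t j' :=
      Finset.exists_ne_map_eq_of_card_lt_of_maps_to (t := F)
        (by rw [Finset.card_range]; omega) (fun j _ => ht1 j)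
    obtain ⟨j, hj, j', hj', hne, hteq⟩ := hpig
    rw [Finset.mem_range] at hj hj'
    -- wlog j < j'
    rcases Nat.lt_or_ge j j' with hlt | hge
    case _ =>
      have hm1 : t j + (d + s j + a) ∈ A := ht2 j hj
      have hm2 : t j + (d + s j' + a) ∈ A := hteq ▸ ht2 j' hj'
      simp only [mem_iUnion, mem_setOf_eq]
      refine ⟨t j + s j, Finset.mem_image.mpr ⟨(t j, j),
        Finset.mem_product.mpr ⟨ht1 j, Finset.mem_range.mpr hj⟩, rfl⟩, ?_⟩
      refine ⟨(j, j'), ?_, ?_, ?_⟩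
      · simp only [hP_def, Finset.mem_filter, Finset.mem_product, Finset.mem_range]
        exact ⟨⟨hj, hj'⟩, hlt⟩
      · have : t j + s j + (d + a) = t j + (d + s j + a) := by omega
        rw [this]; exact hm1
      · have heq : t j + s j + (d + a) + c * np (j, j') = t j + (d + s j' + a) := by
          have := hsum j j' hlt
          omega
        rw [heq]; exact hm2
    case _ =>
      have hlt : j' < j := by omega
      have hm1 : t j' + (d + s j' + a) ∈ A := ht2 j' hj'
      have hm2 : t j' + (d + s j + a) ∈ A := by rw [← hteq]; exact ht2 j hj
      simp only [mem_iUnion, mem_setOf_eq]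
      refine ⟨t j' + s j', Finset.mem_image.mpr ⟨(t j', j'),
        Finset.mem_product.mpr ⟨ht1 j', Finset.mem_range.mpr hj'⟩, rfl⟩, ?_⟩
      refine ⟨(j', j), ?_, ?_, ?_⟩
      · simp only [hP_def, Finset.mem_filter, Finset.mem_product, Finset.mem_range]
        exact ⟨⟨hj', hj⟩, hlt⟩
      · have : t j' + s j' + (d + a) = t j' + (d + s j' + a) := by omega
        rw [this]; exact hm1
      · have heq : t j' + s j' + (d + a) + c * np (j', j) = t j' + (d + s j + a) := by
          have := hsum j' j hlt
          omega
        rw [heq]; exact hm2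
  obtain ⟨p, hp, hps⟩ := ps_finset_union P _ key
  refine ⟨np p, hps, ?_⟩
  simp only [hP_def, Finset.mem_filter, Finset.mem_product, Finset.mem_range] at hp
  exact ⟨Finset.Ico p.1 p.2, Finset.nonempty_Ico.mpr hp.2, rfl⟩

theorem ipstar_pvdw_linear (A : Set ℕ) (hA : PiecewiseSyndetic A) (c : ℕ) (hc : 1 ≤ c) :
    {n : ℕ | PiecewiseSyndetic {m : ℕ | m ∈ A ∧ m + c * n ∈ A}}.Nonempty ∧
    ∀ x : ℕ → ℕ, Function.Injective x →
      ({n : ℕ | PiecewiseSyndetic {m : ℕ | m ∈ A ∧ m + c * n ∈ A}} ∩ FS x).Nonempty := by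
  constructor
  · obtain ⟨n, hn, _⟩ := main_aux A hA c id Function.injective_id
    exact ⟨n, hn⟩
  · exact fun x hx => main_aux A hA c x hx
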